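/- If T is an A-bounded operator on H satisfying AT² = 0, then ω_A(T) = (1/2)‖T‖_A. Consequently, for an A-bounded Q, the matrix [[0,Q],[0,0]] on H⊕H satisfies ω_𝔸([[0,Q],[0,0]]) = (1/2)‖Q‖_A. -/

import Mathlib

open ContinuousLinearMap

/-- The `A`-seminorm of a vector: `‖x‖_A = √⟨Ax, x⟩`. -/
noncomputable def vnormA {H : Type*} [NormedAddCommGroup H] [InnerProductSpace ℂ H]
    (A : H →L[ℂ] H) (x : H) : ℝ :=
  Real.sqrt (RCLike.re (inner ℂ (A x) x : ℂ))

/-- `T` is `A`-bounded, i.e. `T ∈ B_{A^{1/2}}(H)`. -/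
def ABounded {H : Type*} [NormedAddCommGroup H] [InnerProductSpace ℂ H]
    (A T : H →L[ℂ] H) : Prop :=
  ∃ c : ℝ, 0 < c ∧ ∀ x, vnormA A (T x) ≤ c * vnormA A x

/-- The `A`-operator seminorm `‖T‖_A = sup{‖Tx‖_A : ‖x‖_A = 1}`. -/
noncomputable def opNormA {H : Type*} [NormedAddCommGroup H] [InnerProductSpace ℂ H]
    (A T : H →L[ℂ] H) : ℝ :=
  sSup {c : ℝ | ∃ x : H, vnormA A x = 1 ∧ c = vnormA A (T x)}

/-- The `A`-numerical radius `ω_A(T) = sup{|⟨ATx, x⟩| : ‖x‖_A = 1}`. -/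
noncomputable def wA {H : Type*} [NormedAddCommGroup H] [InnerProductSpace ℂ H]
    (A T : H →L[ℂ] H) : ℝ :=
  sSup {c : ℝ | ∃ x : H, vnormA A x = 1 ∧ c = ‖(inner ℂ (A (T x)) x : ℂ)‖}

/-- `Ts` is the reduced (Douglas) solution of `AX = T*A`, i.e. `Ts = T^{♯_A}`. -/
def IsReducedAdjoint {H : Type*} [NormedAddCommGroup H] [InnerProductSpace ℂ H]
    [CompleteSpace H] (A T Ts : H →L[ℂ] H) : Prop :=
  A ∘L Ts = (ContinuousLinearMap.adjoint T) ∘L A ∧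
    ∀ y, Ts y ∈ closure (Set.range A)

/-- The `2 × 2` operator matrix `[[P, Q], [R, S]]` acting on `H ⊕ H` (with the `ℓ²` product
inner product). -/
noncomputable def blk {H : Type*} [NormedAddCommGroup H] [InnerProductSpace ℂ H]
    (P Q R S : H →L[ℂ] H) : WithLp 2 (H × H) →L[ℂ] WithLp 2 (H × H) :=
  letI e := (WithLp.prodContinuousLinearEquiv 2 ℂ H H)
  (e.symm.toContinuousLinearMap) ∘L
    ((P.comp (fst ℂ H H) + Q.comp (snd ℂ H H)).prod
      (R.comp (fst ℂ H H) + S.comp (snd ℂ H H))) ∘L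
    (e.toContinuousLinearMap)

/-- `𝔸 = diag(A, A)` on `H ⊕ H`. -/
noncomputable def AA {H : Type*} [NormedAddCommGroup H] [InnerProductSpace ℂ H]
    (A : H →L[ℂ] H) : WithLp 2 (H × H) →L[ℂ] WithLp 2 (H × H) :=
  blk A 0 0 A

section helpers
set_option linter.unusedSectionVars false
variable {H : Type*} [NormedAddCommGroup H] [InnerProductSpace ℂ H] [CompleteSpace H]
variable {A : H →L[ℂ] H}

local notation "⟪" x ", " y "⟫" => (inner ℂ x y : ℂ)

lemma reC (z : ℂ) : RCLike.re z = z.re := rfl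

lemma vnormA_eq (A : H →L[ℂ] H) (x : H) : vnormA A x = Real.sqrt (⟪A x, x⟫.re) := rfl

lemma vnorm_nonneg (A : H →L[ℂ] H) (x : H) : 0 ≤ vnormA A x := Real.sqrt_nonneg _

lemma reA_nonneg (hA : A.IsPositive) (x : H) : 0 ≤ (⟪A x, x⟫).re := hA.2 x

lemma vnorm_sq (hA : A.IsPositive) (x : H) : vnormA A x ^ 2 = (⟪A x, x⟫).re :=
  Real.sq_sqrt (reA_nonneg hA x)

lemma inner_conj_A (hA : A.IsPositive) (x y : H) :
    (starRingEnd ℂ) ⟪A x, y⟫ = ⟪A y, x⟫ := by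
  rw [inner_conj_symm]; exact (hA.1 y x).symm

lemma innerA_self_real (hA : A.IsPositive) (x : H) : ⟪A x, x⟫ = ((⟪A x, x⟫.re : ℝ) : ℂ) := by
  have h := inner_conj_A hA x x
  have := Complex.conj_eq_iff_re.mp h
  exact this.symm

lemma vnorm_smul (hA : A.IsPositive) (c : ℂ) (x : H) :
    vnormA A (c • x) = ‖c‖ * vnormA A x := by
  rw [vnormA_eq, vnormA_eq, map_smul, inner_smul_left, inner_smul_right, ← mul_assoc]
  have h : ((starRingEnd ℂ) c * c) = ((‖c‖ ^ 2 : ℝ) : ℂ) := by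
    rw [mul_comm, Complex.mul_conj, Complex.normSq_eq_norm_sq]
  have h2 : ∀ (r : ℝ) (z : ℂ), ((r : ℂ) * z).re = r * z.re := by
    intro r z; simp [Complex.mul_re]
  rw [h, h2, Real.sqrt_mul (by positivity), Real.sqrt_sq (by positivity)]

lemma expandA (hA : A.IsPositive) (x y : H) (c : ℂ) :
    (⟪A (x + c • y), x + c • y⟫).re =
      (⟪A x, x⟫).re + 2 * (c * ⟪A x, y⟫).re + ‖c‖ ^ 2 * (⟪A y, y⟫).re := by
  have hyx : ⟪A y, x⟫ = (starRingEnd ℂ) ⟪A x, y⟫ := (inner_conj_A hA x y).symm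
  have hcc : ((‖c‖ ^ 2 : ℝ) : ℂ) = (starRingEnd ℂ) c * c := by
    rw [mul_comm, Complex.mul_conj, Complex.normSq_eq_norm_sq]
  have h1 : ⟪A (x + c • y), x + c • y⟫ =
      ⟪A x, x⟫ + (c * ⟪A x, y⟫ + (starRingEnd ℂ) (c * ⟪A x, y⟫))
        + ((‖c‖ ^ 2 : ℝ) : ℂ) * ⟪A y, y⟫ := by
    rw [map_add, map_smul, hcc]
    simp only [inner_add_left, inner_add_right, inner_smul_left, inner_smul_right, hyx, map_mul,
      RingHomCompTriple.comp_apply, RingHom.id_apply]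
    ring
  rw [h1]
  simp only [Complex.add_re, Complex.conj_re, Complex.mul_re, Complex.ofReal_re,
    Complex.ofReal_im]
  ring

lemma csA (hA : A.IsPositive) (x y : H) :
    ‖⟪A x, y⟫‖ ≤ vnormA A x * vnormA A y := by
  by_cases hs : ⟪A x, y⟫ = 0
  · rw [hs]; simpa using mul_nonneg (vnorm_nonneg A x) (vnorm_nonneg A y)
  set s := ⟪A x, y⟫ with hsdef
  set k := ‖s‖ with hk
  set px := (⟪A x, x⟫).re with hpx
  set py := (⟪A y, y⟫).re with hpy
  have habs : 0 < k := by rw [hk]; exact (norm_pos_iff.mpr hs)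
  set σ : ℂ := (starRingEnd ℂ) s / (k : ℂ) with hσ
  have hσs : σ * s = (k : ℂ) := by
    rw [hσ, div_mul_eq_mul_div, mul_comm, Complex.mul_conj, Complex.normSq_eq_norm_sq, ← hk]
    push_cast
    rw [pow_two, mul_div_assoc, div_self (by exact_mod_cast habs.ne'), mul_one]
  have hσn : ‖σ‖ = 1 := by
    rw [hσ, norm_div, Complex.norm_conj, Complex.norm_real, Real.norm_eq_abs, abs_of_pos habs, ← hk,
      div_self habs.ne']
  have key : ∀ t : ℝ, 0 ≤ px + 2 * (t * k) + t ^ 2 * py := by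
    intro t
    have h0 := reA_nonneg hA (x + ((t : ℂ) * σ) • y)
    rw [expandA hA] at h0
    have hc : ((t : ℂ) * σ) * s = ((t * k : ℝ) : ℂ) := by
      rw [mul_assoc, hσs]; push_cast; ring
    rw [hc] at h0
    have hnc : ‖(t : ℂ) * σ‖ ^ 2 = t ^ 2 := by
      rw [norm_mul, hσn, mul_one, Complex.norm_real, Real.norm_eq_abs, sq_abs]
    rw [hnc] at h0
    simpa using h0
  have hsq : k ^ 2 ≤ px * py := by
    rcases eq_or_lt_of_le (reA_nonneg hA y) with hpy0 | hpy0
    · exfalso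
      rw [← hpy] at hpy0
      have e1 : px + 2 * (-(px + 1) / (2 * k) * k) + (-(px + 1) / (2 * k)) ^ 2 * py = -1 := by
        rw [← hpy0]
        field_simp
        ring
      have := key (-(px + 1) / (2 * k))
      rw [e1] at this
      linarith
    · rw [← hpy] at hpy0
      have e1 : px + 2 * (-k / py * k) + (-k / py) ^ 2 * py = px - k ^ 2 / py := by
        field_simp; ring
      have e2 : 0 ≤ px - k ^ 2 / py := e1 ▸ key _
      have e3 : k ^ 2 / py ≤ px := by linarith
      calc k ^ 2 = (k ^ 2 / py) * py := by field_simp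
        _ ≤ px * py := by
            apply mul_le_mul_of_nonneg_right e3 hpy0.le
  calc k = Real.sqrt (k ^ 2) := by rw [Real.sqrt_sq habs.le]
    _ ≤ Real.sqrt (px * py) := Real.sqrt_le_sqrt hsq
    _ = vnormA A x * vnormA A y := by
        rw [Real.sqrt_mul (reA_nonneg hA x), vnormA_eq, vnormA_eq]



lemma opNormA_nonneg (A T : H →L[ℂ] H) : 0 ≤ opNormA A T :=
  Real.sSup_nonneg (by rintro c ⟨x, -, rfl⟩; exact vnorm_nonneg A (T x))

lemma wA_nonneg (A T : H →L[ℂ] H) : 0 ≤ wA A T :=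
  Real.sSup_nonneg (by rintro c ⟨x, -, rfl⟩; positivity)

lemma opNormA_bdd (hT : ABounded A T) :
    BddAbove {c : ℝ | ∃ x : H, vnormA A x = 1 ∧ c = vnormA A (T x)} := by
  obtain ⟨c, hc, hb⟩ := hT
  exact ⟨c, by rintro r ⟨x, hx, rfl⟩; simpa [hx] using hb x⟩

lemma wA_bdd (hA : A.IsPositive) (hT : ABounded A T) :
    BddAbove {c : ℝ | ∃ x : H, vnormA A x = 1 ∧ c = ‖⟪A (T x), x⟫‖} := by
  obtain ⟨c, hc, hb⟩ := hT
  refine ⟨c, ?_⟩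
  rintro r ⟨x, hx, rfl⟩
  calc ‖⟪A (T x), x⟫‖ ≤ vnormA A (T x) * vnormA A x := csA hA _ _
    _ = vnormA A (T x) := by rw [hx, mul_one]
    _ ≤ c * vnormA A x := hb x
    _ = c := by rw [hx, mul_one]

/-- homogeneous operator-norm bound -/
lemma le_opNormA (hA : A.IsPositive) (hT : ABounded A T) (x : H) :
    vnormA A (T x) ≤ opNormA A T * vnormA A x := by
  obtain ⟨c, hc, hb⟩ := hT
  rcases eq_or_lt_of_le (vnorm_nonneg A x) with h0 | h0
  · have : vnormA A (T x) = 0 := le_antisymm (by simpa [← h0] using hb x) (vnorm_nonneg A _)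
    rw [this, ← h0, mul_zero]
  · set r := vnormA A x with hr
    have hmem : r⁻¹ * vnormA A (T x) ∈
        {c : ℝ | ∃ x : H, vnormA A x = 1 ∧ c = vnormA A (T x)} := by
      refine ⟨((r : ℝ) : ℂ)⁻¹ • x, ?_, ?_⟩
      · rw [vnorm_smul hA, norm_inv, Complex.norm_real, Real.norm_eq_abs, abs_of_pos h0, ← hr,
          inv_mul_cancel₀ h0.ne']
      · rw [map_smul, vnorm_smul hA, norm_inv, Complex.norm_real, Real.norm_eq_abs, abs_of_pos h0]
    have := le_csSup (opNormA_bdd ⟨c, hc, hb⟩) hmem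
    rw [inv_mul_le_iff₀ h0] at this
    have e : sSup {c : ℝ | ∃ x : H, vnormA A x = 1 ∧ c = vnormA A (T x)} = opNormA A T := rfl
    rw [e, mul_comm] at this
    exact this

/-- homogeneous numerical-radius bound -/
lemma abs_inner_le_wA (hA : A.IsPositive) (hT : ABounded A T) (x : H) :
    ‖⟪A (T x), x⟫‖ ≤ wA A T * vnormA A x ^ 2 := by
  rcases eq_or_lt_of_le (vnorm_nonneg A x) with h0 | h0
  · have h1 : ‖⟪A (T x), x⟫‖ ≤ vnormA A (T x) * vnormA A x := csA hA _ _
    rw [← h0] at h1 ⊢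
    simpa using h1
  · set r := vnormA A x with hr
    have hmem : r⁻¹ ^ 2 * ‖⟪A (T x), x⟫‖ ∈
        {c : ℝ | ∃ x : H, vnormA A x = 1 ∧ c = ‖⟪A (T x), x⟫‖} := by
      refine ⟨((r : ℝ) : ℂ)⁻¹ • x, ?_, ?_⟩
      · rw [vnorm_smul hA, norm_inv, Complex.norm_real, Real.norm_eq_abs, abs_of_pos h0, ← hr,
          inv_mul_cancel₀ h0.ne']
      · rw [map_smul, map_smul, inner_smul_left, inner_smul_right, ← mul_assoc, norm_mul, norm_mul,
          Complex.norm_conj]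
        rw [norm_inv, Complex.norm_real, Real.norm_eq_abs, abs_of_pos h0]
        ring
    have := le_csSup (wA_bdd hA hT) hmem
    rw [inv_pow, inv_mul_le_iff₀ (by positivity)] at this
    have e : sSup {c : ℝ | ∃ x : H, vnormA A x = 1 ∧ c = ‖⟪A (T x), x⟫‖}
        = wA A T := rfl
    rw [e, mul_comm] at this
    exact this

lemma keyA (hA : A.IsPositive) (hT : ABounded A T) (hT2 : A ∘L (T ∘L T) = 0) :
    wA A T = (1 / 2) * opNormA A T := by
  have hATT : ∀ z : H, A (T (T z)) = 0 := by
    intro z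
    have := ContinuousLinearMap.ext_iff.mp hT2 z
    simpa using this
  have hopnn := opNormA_nonneg A T
  have hwnn := wA_nonneg A T
  -- upper bound : wA ≤ ½ opNorm
  have hub : wA A T ≤ (1 / 2) * opNormA A T := by
    apply Real.sSup_le _ (by positivity)
    rintro c ⟨x, hx, rfl⟩
    set μ := ⟪A (T x), x⟫ with hμ
    set m := ‖μ‖ with hm
    have hmnn : 0 ≤ m := by positivity
    set b := (⟪A (T x), T x⟫).re with hb
    have hbnn : 0 ≤ b := reA_nonneg hA (T x)
    have hreAx : (⟪A x, x⟫).re = 1 := by rw [← vnorm_sq hA, hx]; norm_num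
    have hvTx : vnormA A (T x) = Real.sqrt b := rfl
    have hm2b : m ^ 2 ≤ b := by
      have h1 := csA hA (T x) x
      rw [hx, mul_one, hvTx] at h1
      have h2 : m ^ 2 ≤ Real.sqrt b ^ 2 := by
        apply pow_le_pow_left₀ hmnn h1
      rwa [Real.sq_sqrt hbnn] at h2
    rcases eq_or_lt_of_le hmnn with hm0 | hm0
    · rw [← hm0]; positivity
    have hbpos : 0 < b := lt_of_lt_of_le (by nlinarith) hm2b
    -- the test vector
    set cc : ℂ := -(μ / (b : ℂ)) with hcc
    set w : H := x + cc • T x with hw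
    have hAxTx : ⟪A x, T x⟫ = (starRingEnd ℂ) μ := by
      rw [hμ, ← inner_conj_A hA (T x) x]
    have habs_cc : ‖cc‖ = m / b := by
      rw [hcc, norm_neg, norm_div, Complex.norm_real, Real.norm_eq_abs, abs_of_pos hbpos, hm]
    have hwsq : vnormA A w ^ 2 = 1 - m ^ 2 / b := by
      rw [hw, vnorm_sq hA, expandA hA, hreAx, hAxTx, ← hb, habs_cc]
      have h3 : (cc * (starRingEnd ℂ) μ).re = -(m ^ 2 / b) := by
        rw [hcc, neg_mul, div_mul_eq_mul_div, Complex.mul_conj, Complex.normSq_eq_norm_sq, ← hm]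
        rw [show ((m ^ 2 : ℝ) : ℂ) / ((b : ℝ) : ℂ) = ((m ^ 2 / b : ℝ) : ℂ) from
          (Complex.ofReal_div _ _).symm, Complex.neg_re, Complex.ofReal_re]
      rw [h3]
      field_simp
      ring
    have hTwsq : vnormA A (T w) ^ 2 = b := by
      rw [vnorm_sq hA, hw]
      have h4 : T (x + cc • T x) = T x + cc • T (T x) := by rw [map_add, map_smul]
      rw [h4, expandA hA, ← hb]
      have h5 : ⟪A (T x), T (T x)⟫ = 0 := by
        rw [← inner_conj_A hA (T (T x)) (T x), hATT x]
        simp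
      have h6 : (⟪A (T (T x)), T (T x)⟫) = 0 := by rw [hATT x]; simp
      rw [h5, h6]
      simp
    rcases eq_or_lt_of_le hm2b with hbe | hblt
    · -- degenerate: contradiction with ABounded
      exfalso
      obtain ⟨cb, hcb, hbd⟩ := hT
      have hw0 : vnormA A w = 0 := by
        have : vnormA A w ^ 2 = 0 := by rw [hwsq, hbe]; field_simp; norm_num
        exact pow_eq_zero_iff (n := 2) (by norm_num) |>.mp this
      have := hbd w
      rw [hw0, mul_zero] at this
      have hTw0 : vnormA A (T w) = 0 := le_antisymm this (vnorm_nonneg A _)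
      rw [← hTwsq, hTw0] at hbpos
      norm_num at hbpos
    · -- main case
      set vw := vnormA A w with hvw
      have hvwpos : 0 < vw := by
        have h7 : 0 < vw ^ 2 := by
          rw [hwsq]
          have : m ^ 2 / b < 1 := (div_lt_one hbpos).mpr hblt
          linarith
        nlinarith [vnorm_nonneg A w, h7]
      set u : H := ((vw : ℝ) : ℂ)⁻¹ • w with hu
      have hun : vnormA A u = 1 := by
        rw [hu, vnorm_smul hA, norm_inv, Complex.norm_real, Real.norm_eq_abs, abs_of_pos hvwpos, ← hvw,
          inv_mul_cancel₀ hvwpos.ne']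
      have hTu : vnormA A (T u) = vw⁻¹ * Real.sqrt b := by
        rw [hu, map_smul, vnorm_smul hA, norm_inv, Complex.norm_real, Real.norm_eq_abs, abs_of_pos hvwpos]
        congr 1
        rw [← Real.sqrt_sq (vnorm_nonneg A (T w)), hTwsq]
      have hmem : vw⁻¹ * Real.sqrt b ∈
          {c : ℝ | ∃ x : H, vnormA A x = 1 ∧ c = vnormA A (T x)} := ⟨u, hun, hTu.symm⟩
      have hle := le_csSup (opNormA_bdd hT) hmem
      have e : sSup {c : ℝ | ∃ x : H, vnormA A x = 1 ∧ c = vnormA A (T x)} = opNormA A T := rfl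
      rw [e] at hle
      -- 2 m ≤ vw⁻¹ √b
      have h2m : 2 * m ≤ vw⁻¹ * Real.sqrt b := by
        have h8 : (2 * m * vw) ^ 2 ≤ b := by
          have e1 : (2 * m * vw) ^ 2 = (2 ^ 2 * m ^ 2 * (b - m ^ 2)) / b := by
            rw [mul_pow, mul_pow, hwsq]
            field_simp
          rw [e1, div_le_iff₀ hbpos]
          nlinarith [sq_nonneg (b - 2 * m ^ 2)]
        have h9 : 2 * m * vw ≤ Real.sqrt b := by
          have := Real.sqrt_le_sqrt h8
          rwa [Real.sqrt_sq (by positivity)] at this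
        calc 2 * m = (2 * m * vw) * vw⁻¹ := by field_simp
          _ ≤ Real.sqrt b * vw⁻¹ := by
              apply mul_le_mul_of_nonneg_right h9 (by positivity)
          _ = vw⁻¹ * Real.sqrt b := by ring
      linarith
  -- lower bound : opNorm ≤ 2 wA
  have hlb : opNormA A T ≤ 2 * wA A T := by
    apply Real.sSup_le _ (by positivity)
    rintro c ⟨x, hx, rfl⟩
    rcases eq_or_lt_of_le (vnorm_nonneg A (T x)) with h0 | h0
    · rw [← h0]; positivity
    set r := vnormA A (T x) with hr
    set y : H := ((r : ℝ) : ℂ)⁻¹ • T x with hy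
    have hyn : vnormA A y = 1 := by
      rw [hy, vnorm_smul hA, norm_inv, Complex.norm_real, Real.norm_eq_abs, abs_of_pos h0, ← hr,
        inv_mul_cancel₀ h0.ne']
    have hATy : A (T y) = 0 := by
      rw [hy, map_smul, map_smul, hATT x, smul_zero]
    have hinner_y : ⟪A (T x), y⟫ = (r : ℂ) := by
      have hrc : ((r : ℝ) : ℂ) ≠ 0 := by exact_mod_cast h0.ne'
      rw [hy, inner_smul_right, innerA_self_real hA (T x), ← vnorm_sq hA, ← hr]
      push_cast
      field_simp
    have hiden : ⟪A (T (x + y)), x + y⟫ - ⟪A (T (x - y)), x - y⟫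
        = 2 * ⟪A (T x), y⟫ + 2 * ⟪A (T y), x⟫ := by
      simp only [map_add, map_sub, inner_add_left, inner_add_right, inner_sub_left,
        inner_sub_right]
      ring
    rw [hATy, hinner_y] at hiden
    simp only [inner_zero_left, mul_zero, add_zero] at hiden
    have hre : (⟪A (T (x + y)), x + y⟫).re - (⟪A (T (x - y)), x - y⟫).re = 2 * r := by
      have := congrArg Complex.re hiden
      simpa using this
    have hpar : vnormA A (x + y) ^ 2 + vnormA A (x - y) ^ 2 = 4 := by
      have h1 : (⟪A x, x⟫).re = 1 := by rw [← vnorm_sq hA, hx]; norm_num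
      have h2 : (⟪A y, y⟫).re = 1 := by rw [← vnorm_sq hA, hyn]; norm_num
      have h1c : ⟪A x, x⟫ = 1 := by rw [innerA_self_real hA, h1]; norm_num
      have h2c : ⟪A y, y⟫ = 1 := by rw [innerA_self_real hA, h2]; norm_num
      have hc : ⟪A (x + y), x + y⟫ + ⟪A (x - y), x - y⟫ = 4 := by
        simp only [map_add, map_sub, inner_add_left, inner_add_right, inner_sub_left,
          inner_sub_right, h1c, h2c]
        ring
      rw [vnorm_sq hA, vnorm_sq hA]
      have hre4 := congrArg Complex.re hc
      rw [Complex.add_re] at hre4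
      have h4 : ((4 : ℂ)).re = (4 : ℝ) := by norm_num
      rw [h4] at hre4
      exact hre4
    have hb1 := abs_inner_le_wA hA hT (x + y)
    have hb2 := abs_inner_le_wA hA hT (x - y)
    have hr1 : (⟪A (T (x + y)), x + y⟫).re ≤ wA A T * vnormA A (x + y) ^ 2 :=
      le_trans (Complex.re_le_norm _) hb1
    have hr2 : -(⟪A (T (x - y)), x - y⟫).re ≤ wA A T * vnormA A (x - y) ^ 2 := by
      refine le_trans ?_ hb2
      have h := Complex.re_le_norm (-(⟪A (T (x - y)), x - y⟫))
      rwa [Complex.neg_re, norm_neg] at h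
    have hfin : (⟪A (T (x + y)), x + y⟫).re - (⟪A (T (x - y)), x - y⟫).re ≤ 4 * wA A T := by
      calc (⟪A (T (x + y)), x + y⟫).re - (⟪A (T (x - y)), x - y⟫).re
          ≤ wA A T * vnormA A (x + y) ^ 2 + wA A T * vnormA A (x - y) ^ 2 := by linarith
        _ = wA A T * (vnormA A (x + y) ^ 2 + vnormA A (x - y) ^ 2) := by ring
        _ = 4 * wA A T := by rw [hpar]; ring
    linarith
  linarith


lemma eq_of_sq_eq {a b : ℝ} (ha : 0 ≤ a) (hb : 0 ≤ b) (h : a ^ 2 = b ^ 2) : a = b := by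
  nlinarith [sq_nonneg (a - b)]
lemma le_of_sq_le {a b : ℝ} (ha : 0 ≤ a) (hb : 0 ≤ b) (h : a ^ 2 ≤ b ^ 2) : a ≤ b := by
  nlinarith [sq_nonneg (a - b)]

lemma vnorm_zero (A : H →L[ℂ] H) : vnormA A (0 : H) = 0 := by
  rw [vnormA_eq]
  simp

-- block matrix component lemmas
lemma AA_fst (A : H →L[ℂ] H) (v : WithLp 2 (H × H)) : (AA A v).fst = A v.fst := by
  show A v.fst + (0 : H →L[ℂ] H) v.snd = A v.fst
  simp
lemma AA_snd (A : H →L[ℂ] H) (v : WithLp 2 (H × H)) : (AA A v).snd = A v.snd := by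
  show (0 : H →L[ℂ] H) v.fst + A v.snd = A v.snd
  simp
lemma blkQ_fst (Q : H →L[ℂ] H) (v : WithLp 2 (H × H)) :
    ((blk 0 Q 0 0) v).fst = Q v.snd := by
  show (0 : H →L[ℂ] H) v.fst + Q v.snd = Q v.snd
  simp
lemma blkQ_snd (Q : H →L[ℂ] H) (v : WithLp 2 (H × H)) :
    ((blk 0 Q 0 0) v).snd = 0 := by
  show (0 : H →L[ℂ] H) v.fst + (0 : H →L[ℂ] H) v.snd = 0
  simp

lemma inner_AA (A : H →L[ℂ] H) (v w : WithLp 2 (H × H)) :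
    ⟪AA A v, w⟫ = ⟪A v.fst, w.fst⟫ + ⟪A v.snd, w.snd⟫ := by
  rw [WithLp.prod_inner_apply]
  show ⟪(AA A v).fst, w.fst⟫ + ⟪(AA A v).snd, w.snd⟫ = _
  rw [AA_fst, AA_snd]

lemma AA_pos (hA : A.IsPositive) : (AA A).IsPositive := by
  constructor
  · intro v w
    have h1 := hA.1
    show ⟪AA A v, w⟫ = ⟪v, AA A w⟫
    rw [inner_AA, WithLp.prod_inner_apply]
    show _ = ⟪v.fst, (AA A w).fst⟫ + ⟪v.snd, (AA A w).snd⟫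
    rw [AA_fst, AA_snd]
    have e1 := h1 v.fst w.fst
    have e2 := h1 v.snd w.snd
    simp only [ContinuousLinearMap.coe_coe] at e1 e2
    rw [e1, e2]
  · intro v
    show 0 ≤ (⟪AA A v, v⟫).re
    rw [inner_AA, Complex.add_re]
    exact add_nonneg (reA_nonneg hA _) (reA_nonneg hA _)

lemma vnorm_AA_sq (hA : A.IsPositive) (v : WithLp 2 (H × H)) :
    vnormA (AA A) v ^ 2 = vnormA A v.fst ^ 2 + vnormA A v.snd ^ 2 := by
  rw [vnorm_sq (AA_pos hA), inner_AA, Complex.add_re, vnorm_sq hA, vnorm_sq hA]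

lemma vnorm_blkQ (hA : A.IsPositive) (Q : H →L[ℂ] H) (v : WithLp 2 (H × H)) :
    vnormA (AA A) ((blk 0 Q 0 0) v) = vnormA A (Q v.snd) := by
  apply eq_of_sq_eq (vnorm_nonneg _ _) (vnorm_nonneg _ _)
  rw [vnorm_AA_sq hA, blkQ_fst, blkQ_snd, vnorm_zero]
  ring

lemma snd_le_vnorm_AA (hA : A.IsPositive) (v : WithLp 2 (H × H)) :
    vnormA A v.snd ≤ vnormA (AA A) v := by
  apply le_of_sq_le (vnorm_nonneg _ _) (vnorm_nonneg _ _)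
  rw [vnorm_AA_sq hA]
  nlinarith [sq_nonneg (vnormA A v.fst)]

lemma blkQ_bounded (hA : A.IsPositive) {Q : H →L[ℂ] H} (hQ : ABounded A Q) :
    ABounded (AA A) (blk 0 Q 0 0) := by
  obtain ⟨c, hc, hb⟩ := hQ
  refine ⟨c, hc, fun v => ?_⟩
  rw [vnorm_blkQ hA]
  calc vnormA A (Q v.snd) ≤ c * vnormA A v.snd := hb _
    _ ≤ c * vnormA (AA A) v := by
        exact mul_le_mul_of_nonneg_left (snd_le_vnorm_AA hA v) hc.le

lemma blkQ_sq_zero (A Q : H →L[ℂ] H) : AA A ∘L ((blk 0 Q 0 0) ∘L (blk 0 Q 0 0)) = 0 := by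
  ext v
  show AA A ((blk 0 Q 0 0) ((blk 0 Q 0 0) v)) = 0
  apply WithLp.ofLp_injective
  refine Prod.ext ?_ ?_
  · show (AA A _).fst = (0 : WithLp 2 (H × H)).fst
    rw [AA_fst, blkQ_fst, blkQ_snd, map_zero, map_zero]
    rfl
  · show (AA A _).snd = (0 : WithLp 2 (H × H)).snd
    rw [AA_snd, blkQ_snd, map_zero]
    rfl

lemma opNorm_blkQ (hA : A.IsPositive) {Q : H →L[ℂ] H} (hQ : ABounded A Q) :
    opNormA (AA A) (blk 0 Q 0 0) = opNormA A Q := by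
  apply le_antisymm
  · apply Real.sSup_le _ (opNormA_nonneg A Q)
    rintro c ⟨v, hv, rfl⟩
    rw [vnorm_blkQ hA]
    have hsnd : vnormA A v.snd ≤ 1 := by rw [← hv]; exact snd_le_vnorm_AA hA v
    calc vnormA A (Q v.snd) ≤ opNormA A Q * vnormA A v.snd := le_opNormA hA hQ _
      _ ≤ opNormA A Q * 1 := mul_le_mul_of_nonneg_left hsnd (opNormA_nonneg A Q)
      _ = opNormA A Q := mul_one _
  · apply Real.sSup_le _ (opNormA_nonneg (AA A) (blk 0 Q 0 0))
    rintro c ⟨y, hy, rfl⟩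
    set v : WithLp 2 (H × H) := (WithLp.equiv 2 (H × H)).symm (0, y) with hvdef
    have hfst : v.fst = 0 := rfl
    have hsnd : v.snd = y := rfl
    have hv1 : vnormA (AA A) v = 1 := by
      apply eq_of_sq_eq (vnorm_nonneg _ _) (by norm_num)
      rw [vnorm_AA_sq hA, hfst, hsnd, vnorm_zero, hy]
      norm_num
    have hvQ : vnormA (AA A) ((blk 0 Q 0 0) v) = vnormA A (Q y) := by
      rw [vnorm_blkQ hA, hsnd]
    exact le_csSup (opNormA_bdd (blkQ_bounded hA hQ)) ⟨v, hv1, hvQ.symm⟩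


end helpers

theorem stmt6 {H : Type*} [NormedAddCommGroup H] [InnerProductSpace ℂ H] [CompleteSpace H]
    (A : H →L[ℂ] H) (hA : A.IsPositive)
    (T Q : H →L[ℂ] H) (hT : ABounded A T) (hT2 : A ∘L (T ∘L T) = 0)
    (hQ : ABounded A Q) :
    wA A T = (1 / 2) * opNormA A T ∧
      wA (AA A) (blk 0 Q 0 0) = (1 / 2) * opNormA A Q := by
  refine ⟨keyA hA hT hT2, ?_⟩
  rw [keyA (AA_pos hA) (blkQ_bounded hA hQ) (blkQ_sq_zero A Q), opNorm_blkQ hA hQ]
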